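/- There exists a constant d ≥ 1, depending only on α, with the following property: for every n ≥ 1, every pair of sign sequences ε, ε′ : ℕ → {−1,+1} with ε_k = ε′_k for 0 ≤ k ≤ n−1, and every pair of sequences (v_k)_{k≥0}, (v′_k)_{k≥0} in [−θ₀, θ₀] satisfying v_k = T_{ε_k}(v_{k+1}) and v′_k = T_{ε′_k}(v′_{k+1}) for all k ≥ 0, one has (1/d)·∏_{k=0}^{n−1} |v′_k| ≤ ∏_{k=0}^{n−1} |v_k| ≤ d·∏_{k=0}^{n−1} |v′_k|. -/

import Mathlib

noncomputable section

/-- `θ₀ = α − √(α² + 2α − 2)`. -/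
def theta0 (α : ℝ) : ℝ := α - Real.sqrt (α ^ 2 + 2 * α - 2)

/-- The Möbius map `T_ε(v) = 2(1−α)/(−2α + εv)` acting on stable directions. -/
def Tmap (α ε v : ℝ) : ℝ := 2 * (1 - α) / (-2 * α + ε * v)

namespace St16

/-- the contraction ratio `κ = θ₀/(2α−θ₀)`. -/
def kconst (α : ℝ) : ℝ := theta0 α / (2 * α - theta0 α)

/-- lower bound `m = 2(1−α)/(2α+θ₀)` for `|T_ε|` on the interval. -/
def mconst (α : ℝ) : ℝ := 2 * (1 - α) / (2 * α + theta0 α)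

/-- the comparison constant. -/
def dconst (α : ℝ) : ℝ :=
  Real.exp (2 * theta0 α / mconst α / (1 - kconst α))

lemma theta0_pos {α : ℝ} (hα : α ∈ Set.Ioo (3/4 : ℝ) 1) : 0 < theta0 α := by
  obtain ⟨h1, h2⟩ := hα
  have harg : (0:ℝ) ≤ α ^ 2 + 2 * α - 2 := by nlinarith
  have hs2 : Real.sqrt (α ^ 2 + 2 * α - 2) ^ 2 = α ^ 2 + 2 * α - 2 :=
    Real.sq_sqrt harg
  have hs0 : 0 ≤ Real.sqrt (α ^ 2 + 2 * α - 2) := Real.sqrt_nonneg _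
  have : Real.sqrt (α ^ 2 + 2 * α - 2) < α := by nlinarith
  unfold theta0; linarith

lemma theta0_lt {α : ℝ} (hα : α ∈ Set.Ioo (3/4 : ℝ) 1) : theta0 α < α := by
  obtain ⟨h1, h2⟩ := hα
  have harg : (0:ℝ) < α ^ 2 + 2 * α - 2 := by nlinarith
  have := Real.sqrt_pos.mpr harg
  unfold theta0; linarith

lemma theta0_id {α : ℝ} (hα : α ∈ Set.Ioo (3/4 : ℝ) 1) :
    theta0 α * (2 * α - theta0 α) = 2 * (1 - α) := by
  obtain ⟨h1, h2⟩ := hα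
  have harg : (0:ℝ) ≤ α ^ 2 + 2 * α - 2 := by nlinarith
  have hs2 : Real.sqrt (α ^ 2 + 2 * α - 2) ^ 2 = α ^ 2 + 2 * α - 2 :=
    Real.sq_sqrt harg
  unfold theta0
  nlinarith [hs2]

lemma kconst_nonneg {α : ℝ} (hα : α ∈ Set.Ioo (3/4 : ℝ) 1) : 0 ≤ kconst α := by
  have h1 := theta0_pos hα
  have h2 := theta0_lt hα
  have h3 : (0:ℝ) < 2 * α - theta0 α := by linarith [hα.1]
  unfold kconst; exact div_nonneg (le_of_lt h1) (le_of_lt h3)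

lemma kconst_lt_one {α : ℝ} (hα : α ∈ Set.Ioo (3/4 : ℝ) 1) : kconst α < 1 := by
  have h1 := theta0_pos hα
  have h2 := theta0_lt hα
  have hαpos : (0:ℝ) < α := by linarith [hα.1]
  have hden : (0:ℝ) < 2 * α - theta0 α := by linarith
  unfold kconst
  rw [div_lt_one hden]
  linarith

lemma mconst_pos {α : ℝ} (hα : α ∈ Set.Ioo (3/4 : ℝ) 1) : 0 < mconst α := by
  have h1 := theta0_pos hα
  have hαpos : (0:ℝ) < α := by linarith [hα.1]
  have h2 := hα.2
  unfold mconst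
  apply div_pos
  · linarith
  · linarith

/-- contraction estimate for `Tmap`. -/
lemma contraction {α : ℝ} (hα : α ∈ Set.Ioo (3/4 : ℝ) 1) (ε : ℝ)
    (hε : ε = 1 ∨ ε = -1) (v w : ℝ) (hv : |v| ≤ theta0 α) (hw : |w| ≤ theta0 α) :
    |Tmap α ε v - Tmap α ε w| ≤ kconst α * |v - w| := by
  have hθ := theta0_pos hα
  have hθα := theta0_lt hα
  have hαpos : (0:ℝ) < α := by linarith [hα.1]
  have hα1 := hα.2
  have hεabs : |ε| = 1 := by rcases hε with h | h <;> simp [h]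
  have hεv : |ε * v| ≤ theta0 α := by rw [abs_mul, hεabs, one_mul]; exact hv
  have hεw : |ε * w| ≤ theta0 α := by rw [abs_mul, hεabs, one_mul]; exact hw
  set a := -2 * α + ε * v with ha_def
  set b := -2 * α + ε * w with hb_def
  have hva := abs_le.mp hεv
  have hwb := abs_le.mp hεw
  have ha : a ≤ -(2 * α - theta0 α) := by rw [ha_def]; linarith [hva.2]
  have hb : b ≤ -(2 * α - theta0 α) := by rw [hb_def]; linarith [hwb.2]
  have hden : (0:ℝ) < 2 * α - theta0 α := by linarith
  have ha0 : a < 0 := by linarith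
  have hb0 : b < 0 := by linarith
  have hab : (2 * α - theta0 α) ^ 2 ≤ a * b := by nlinarith
  have habpos : 0 < a * b := by nlinarith
  have hba : b - a = ε * (w - v) := by rw [ha_def, hb_def]; ring
  have key : Tmap α ε v - Tmap α ε w = 2 * (1 - α) * (b - a) / (a * b) := by
    unfold Tmap
    rw [← ha_def, ← hb_def, div_sub_div _ _ (ne_of_lt ha0) (ne_of_lt hb0)]
    congr 1
    ring
  rw [key, hba, abs_div, abs_mul (2 * (1 - α)) (ε * (w - v)), abs_mul ε (w - v),
    hεabs, one_mul]
  have h2a : |2 * (1 - α)| = 2 * (1 - α) := abs_of_pos (by linarith)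
  have habs : |a * b| = a * b := abs_of_pos habpos
  rw [h2a, habs, abs_sub_comm w v]
  rw [div_le_iff₀ habpos]
  have hid := theta0_id hα
  have hvw : 0 ≤ |v - w| := abs_nonneg _
  have hden' : (2 * α - theta0 α) ≠ 0 := ne_of_gt hden
  have hk : kconst α * (2 * α - theta0 α) ^ 2 = 2 * (1 - α) := by
    unfold kconst
    rw [← hid]
    field_simp
  have h5 : kconst α * (2 * α - theta0 α) ^ 2 * |v - w| ≤ kconst α * (a * b) * |v - w| :=
    mul_le_mul_of_nonneg_right
      (mul_le_mul_of_nonneg_left hab (kconst_nonneg hα)) hvw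
  rw [hk] at h5
  have h6 : kconst α * |v - w| * (a * b) = kconst α * (a * b) * |v - w| := by ring
  rw [h6]
  exact h5

/-- lower bound for `|Tmap|`. -/
lemma lower {α : ℝ} (hα : α ∈ Set.Ioo (3/4 : ℝ) 1) (ε : ℝ)
    (hε : ε = 1 ∨ ε = -1) (w : ℝ) (hw : |w| ≤ theta0 α) :
    mconst α ≤ |Tmap α ε w| := by
  have hθ := theta0_pos hα
  have hθα := theta0_lt hα
  have hαpos : (0:ℝ) < α := by linarith [hα.1]
  have hα1 := hα.2
  have hεabs : |ε| = 1 := by rcases hε with h | h <;> simp [h]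
  have hεw : |ε * w| ≤ theta0 α := by rw [abs_mul, hεabs, one_mul]; exact hw
  have hwb := abs_le.mp hεw
  set b := -2 * α + ε * w with hb_def
  have hb1 : b ≤ -(2 * α - theta0 α) := by rw [hb_def]; linarith [hwb.2]
  have hb2 : -(2 * α + theta0 α) ≤ b := by rw [hb_def]; linarith [hwb.1]
  have hb0 : b < 0 := by linarith
  have habs : |b| ≤ 2 * α + theta0 α := abs_le.mpr ⟨hb2, by linarith⟩
  have habs0 : 0 < |b| := abs_pos.mpr (ne_of_lt hb0)
  unfold Tmap mconst
  rw [← hb_def, abs_div, abs_of_pos (by linarith : (0:ℝ) < 2 * (1 - α))]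
  gcongr

/-- geometric sum bound. -/
lemma geom_bound {κ : ℝ} (h0 : 0 ≤ κ) (h1 : κ < 1) (n : ℕ) :
    ∑ k ∈ Finset.range n, κ ^ k ≤ 1 / (1 - κ) := by
  have hpos : 0 < 1 - κ := by linarith
  induction n with
  | zero =>
    simp only [Finset.range_zero, Finset.sum_empty]
    exact le_of_lt (div_pos one_pos hpos)
  | succ n ih =>
    rw [Finset.sum_range_succ']
    simp only [pow_succ, pow_zero]
    have h2 : ∑ k ∈ Finset.range n, κ ^ k * κ = (∑ k ∈ Finset.range n, κ ^ k) * κ := by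
      rw [Finset.sum_mul]
    rw [h2]
    have h3 : (∑ k ∈ Finset.range n, κ ^ k) * κ ≤ (1 / (1 - κ)) * κ :=
      mul_le_mul_of_nonneg_right ih h0
    have h4 : (1 / (1 - κ)) * κ + 1 = 1 / (1 - κ) := by field_simp; ring
    linarith

/-- one-sided product comparison. -/
lemma oneSide {α : ℝ} (hα : α ∈ Set.Ioo (3/4 : ℝ) 1)
    (n : ℕ) (ε ε' : ℕ → ℝ) (hε : ∀ k, ε k = 1 ∨ ε k = -1)
    (hε' : ∀ k, ε' k = 1 ∨ ε' k = -1) (hagree : ∀ k < n, ε k = ε' k)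
    (v v' : ℕ → ℝ)
    (hv : ∀ k, v k ∈ Set.Icc (-(theta0 α)) (theta0 α))
    (hv' : ∀ k, v' k ∈ Set.Icc (-(theta0 α)) (theta0 α))
    (hrec : ∀ k, v k = Tmap α (ε k) (v (k + 1)))
    (hrec' : ∀ k, v' k = Tmap α (ε' k) (v' (k + 1))) :
    ∏ k ∈ Finset.range n, |v k| ≤ dconst α * ∏ k ∈ Finset.range n, |v' k| := by
  have hθ := theta0_pos hα
  have hm := mconst_pos hα
  have hκ0 := kconst_nonneg hα
  have hκ1 := kconst_lt_one hα
  set κ := kconst α with hκ_def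
  set θ := theta0 α with hθ_def
  set m := mconst α with hm_def
  set c := 2 * θ / m with hc_def
  have hc0 : 0 ≤ c := div_nonneg (by linarith) (le_of_lt hm)
  have hvabs : ∀ k, |v k| ≤ θ := fun k => abs_le.mpr ⟨(hv k).1, (hv k).2⟩
  have hv'abs : ∀ k, |v' k| ≤ θ := fun k => abs_le.mpr ⟨(hv' k).1, (hv' k).2⟩
  -- contraction of differences
  have hdiff : ∀ j, j ≤ n → |v (n - j) - v' (n - j)| ≤ κ ^ j * (2 * θ) := by
    intro j
    induction j with
    | zero =>
      intro _
      simp only [pow_zero, one_mul]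
      calc |v (n - 0) - v' (n - 0)| ≤ |v (n - 0)| + |v' (n - 0)| := abs_sub _ _
        _ ≤ 2 * θ := by linarith [hvabs (n - 0), hv'abs (n - 0)]
    | succ j ih =>
      intro hjn
      have hk : n - (j + 1) < n := by omega
      have hk1 : n - (j + 1) + 1 = n - j := by omega
      set k := n - (j + 1) with hk_def
      have h1 : v k = Tmap α (ε k) (v (k + 1)) := hrec k
      have h2 : v' k = Tmap α (ε k) (v' (k + 1)) := by
        rw [hrec' k, hagree k hk]
      rw [h1, h2]
      have hcon := contraction hα (ε k) (hε k) (v (k + 1)) (v' (k + 1))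
        (hvabs _) (hv'abs _)
      have hih : |v (k + 1) - v' (k + 1)| ≤ κ ^ j * (2 * θ) := by
        rw [hk1]; exact ih (by omega)
      calc |Tmap α (ε k) (v (k + 1)) - Tmap α (ε k) (v' (k + 1))|
          ≤ κ * |v (k + 1) - v' (k + 1)| := hcon
        _ ≤ κ * (κ ^ j * (2 * θ)) := mul_le_mul_of_nonneg_left hih hκ0
        _ = κ ^ (j + 1) * (2 * θ) := by ring
  -- lower bound on |v' k|
  have hlow : ∀ k, m ≤ |v' k| := by
    intro k
    rw [hrec' k]
    exact lower hα (ε' k) (hε' k) (v' (k + 1)) (hv'abs _)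
  -- factorwise bound
  have hfac : ∀ k < n, |v k| ≤ |v' k| * (1 + c * κ ^ (n - k)) := by
    intro k hkn
    have hj : n - (n - k) = k := by omega
    have hd : |v k - v' k| ≤ κ ^ (n - k) * (2 * θ) := by
      have := hdiff (n - k) (by omega)
      rwa [hj] at this
    have h1 : |v k| ≤ |v' k| + κ ^ (n - k) * (2 * θ) := by
      calc |v k| = |v' k + (v k - v' k)| := by ring_nf
        _ ≤ |v' k| + |v k - v' k| := abs_add_le _ _
        _ ≤ |v' k| + κ ^ (n - k) * (2 * θ) := by linarith
    have hpw : (0:ℝ) ≤ κ ^ (n - k) := pow_nonneg hκ0 _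
    have h2 : κ ^ (n - k) * (2 * θ) = m * c * κ ^ (n - k) := by
      rw [hc_def]; field_simp
    have h3 : m * c * κ ^ (n - k) ≤ |v' k| * (c * κ ^ (n - k)) := by
      have := mul_le_mul_of_nonneg_right (hlow k) (mul_nonneg hc0 hpw)
      nlinarith [this]
    nlinarith [h1, h2, h3]
  -- product bound
  have hprod1 : ∏ k ∈ Finset.range n, |v k|
      ≤ ∏ k ∈ Finset.range n, (|v' k| * (1 + c * κ ^ (n - k))) := by
    apply Finset.prod_le_prod (fun k _ => abs_nonneg _)
    intro k hk
    exact hfac k (Finset.mem_range.mp hk)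
  rw [Finset.prod_mul_distrib] at hprod1
  have hprod2 : ∏ k ∈ Finset.range n, (1 + c * κ ^ (n - k))
      ≤ Real.exp (∑ k ∈ Finset.range n, c * κ ^ (n - k)) := by
    rw [Real.exp_sum]
    apply Finset.prod_le_prod
    · intro k _
      have := mul_nonneg hc0 (pow_nonneg hκ0 (n - k))
      linarith
    · intro k _
      have := Real.add_one_le_exp (c * κ ^ (n - k))
      linarith
  have hsum : ∑ k ∈ Finset.range n, c * κ ^ (n - k) ≤ c / (1 - κ) := by
    have hre : ∑ k ∈ Finset.range n, κ ^ (n - k) = ∑ k ∈ Finset.range n, κ ^ (k + 1) := by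
      rw [← Finset.sum_range_reflect (fun j => κ ^ (j + 1)) n]
      exact Finset.sum_congr rfl fun k hk => by
        have := Finset.mem_range.mp hk
        congr 1
        omega
    have hle : ∑ k ∈ Finset.range n, κ ^ (k + 1) ≤ ∑ k ∈ Finset.range n, κ ^ k := by
      apply Finset.sum_le_sum
      intro k _
      calc κ ^ (k + 1) = κ ^ k * κ := by ring
        _ ≤ κ ^ k * 1 := mul_le_mul_of_nonneg_left (le_of_lt hκ1) (pow_nonneg hκ0 _)
        _ = κ ^ k := mul_one _
    have hg := geom_bound hκ0 hκ1 n
    have h1 : ∑ k ∈ Finset.range n, c * κ ^ (n - k)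
        = c * ∑ k ∈ Finset.range n, κ ^ (n - k) := by rw [Finset.mul_sum]
    rw [h1, hre]
    calc c * ∑ k ∈ Finset.range n, κ ^ (k + 1) ≤ c * (1 / (1 - κ)) := by
          apply mul_le_mul_of_nonneg_left _ hc0
          linarith
      _ = c / (1 - κ) := by ring
  have hexp : Real.exp (∑ k ∈ Finset.range n, c * κ ^ (n - k)) ≤ dconst α := by
    unfold dconst
    rw [← hκ_def, ← hθ_def, ← hm_def, ← hc_def]
    exact Real.exp_le_exp.mpr hsum
  have hP' : (0:ℝ) ≤ ∏ k ∈ Finset.range n, |v' k| :=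
    Finset.prod_nonneg fun k _ => abs_nonneg _
  calc ∏ k ∈ Finset.range n, |v k|
      ≤ (∏ k ∈ Finset.range n, |v' k|) * ∏ k ∈ Finset.range n, (1 + c * κ ^ (n - k)) :=
        hprod1
    _ ≤ (∏ k ∈ Finset.range n, |v' k|) * dconst α := by
        apply mul_le_mul_of_nonneg_left _ hP'
        exact le_trans hprod2 hexp
    _ = dconst α * ∏ k ∈ Finset.range n, |v' k| := mul_comm _ _

lemma one_le_dconst {α : ℝ} (hα : α ∈ Set.Ioo (3/4 : ℝ) 1) : 1 ≤ dconst α := by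
  have hθ := theta0_pos hα
  have hm := mconst_pos hα
  have hκ0 := kconst_nonneg hα
  have hκ1 := kconst_lt_one hα
  unfold dconst
  have harg : 0 ≤ 2 * theta0 α / mconst α / (1 - kconst α) :=
    div_nonneg (div_nonneg (by linarith) (le_of_lt hm)) (by linarith)
  have := Real.add_one_le_exp (2 * theta0 α / mconst α / (1 - kconst α))
  linarith

end St16

/-- there is a constant `d ≥ 1`, depending only on `α`, such that for
every `n ≥ 1`, every pair of sign sequences agreeing in positions `0,…,n−1`, and every pair
of corresponding backward-invariant sequences `(v_k)`, `(v′_k)` in `[−θ₀, θ₀]`, one has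
`(1/d)·∏_{k<n} |v′_k| ≤ ∏_{k<n} |v_k| ≤ d·∏_{k<n} |v′_k|`. -/
theorem statement16 (α : ℝ) (hα : α ∈ Set.Ioo (3/4 : ℝ) 1) :
    ∃ d : ℝ, 1 ≤ d ∧
      ∀ n : ℕ, 1 ≤ n →
      ∀ ε ε' : ℕ → ℝ, (∀ k, ε k = 1 ∨ ε k = -1) → (∀ k, ε' k = 1 ∨ ε' k = -1) →
      (∀ k < n, ε k = ε' k) →
      ∀ v v' : ℕ → ℝ,
      (∀ k, v k ∈ Set.Icc (-(theta0 α)) (theta0 α)) →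
      (∀ k, v' k ∈ Set.Icc (-(theta0 α)) (theta0 α)) →
      (∀ k, v k = Tmap α (ε k) (v (k + 1))) →
      (∀ k, v' k = Tmap α (ε' k) (v' (k + 1))) →
      (1 / d) * ∏ k ∈ Finset.range n, |v' k| ≤ ∏ k ∈ Finset.range n, |v k| ∧
      ∏ k ∈ Finset.range n, |v k| ≤ d * ∏ k ∈ Finset.range n, |v' k| := by
  refine ⟨St16.dconst α, St16.one_le_dconst hα, ?_⟩
  intro n _ ε ε' hε hε' hagree v v' hv hv' hrec hrec'
  have hd1 := St16.one_le_dconst hα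
  have hdpos : 0 < St16.dconst α := by linarith
  constructor
  · have h2 : ∏ k ∈ Finset.range n, |v' k|
        ≤ St16.dconst α * ∏ k ∈ Finset.range n, |v k| :=
      St16.oneSide hα n ε' ε hε' hε (fun k hk => (hagree k hk).symm) v' v hv' hv hrec' hrec
    calc (1 / St16.dconst α) * ∏ k ∈ Finset.range n, |v' k|
        ≤ (1 / St16.dconst α) * (St16.dconst α * ∏ k ∈ Finset.range n, |v k|) :=
          mul_le_mul_of_nonneg_left h2 (one_div_nonneg.mpr (le_of_lt hdpos))
      _ = ∏ k ∈ Finset.range n, |v k| := by field_simp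
  · exact St16.oneSide hα n ε ε' hε hε' hagree v v' hv hv' hrec hrec'
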